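/- Let r, s, t be positive integers and let 𝒢 be an r-uniform hypergraph that is K_{s,t}^{(r)}-free. Then for any s-set S of vertices, the common link CN(S) (the set of (r−1)-sets forming an edge with every vertex of S) has a vertex cover of size less than rt; in particular, every minimum vertex cover of CN(S) has fewer than rt vertices. -/

import Mathlib

open Finset
open scoped Classical

noncomputable section

variable {V : Type}

/-- Number of edges of the hypergraph `G` containing the vertex set `A`. -/
def degSet (G : Finset (Finset V)) (A : Finset V) : ℕ :=
  (G.filter fun e => A ⊆ e).card

/-- The neighborhood of an `(r-1)`-tuple `T`: vertices completing `T` to an edge. -/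
def linkN [Fintype V] (G : Finset (Finset V)) (T : Finset V) : Finset V :=
  Finset.univ.filter fun v => v ∉ T ∧ insert v T ∈ G

/-- Common link `CN_G(S)`: the `(r-1)`-sets forming an edge with every vertex of `S`. -/
def CN (r : ℕ) [Fintype V] (G : Finset (Finset V)) (S : Finset V) : Finset (Finset V) :=
  Finset.univ.filter fun T : Finset V =>
    T.card = r - 1 ∧ ∀ v ∈ S, v ∉ T ∧ insert v T ∈ G

/-- `cd_G(S|u)`: number of members of `CN_G(S)` containing `u`. -/
def cdOn (r : ℕ) [Fintype V] (G : Finset (Finset V)) (S : Finset V) (u : V) : ℕ :=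
  ((CN r G S).filter fun T => u ∈ T).card

/-- `C` is a vertex cover of the set family `E`. -/
def IsVertexCover (C : Finset V) (E : Finset (Finset V)) : Prop :=
  ∀ T ∈ E, ∃ v ∈ C, v ∈ T

/-- `G` contains no copy of `K_{s,t}^{(r)}`. -/
def KstFree (r s t : ℕ) (G : Finset (Finset V)) : Prop :=
  ¬ ∃ (X : Fin t → Finset V) (Y : Finset V),
      (∀ i, (X i).card = r - 1) ∧ Y.card = s ∧
      (∀ i j, i ≠ j → Disjoint (X i) (X j)) ∧
      (∀ i, Disjoint (X i) Y) ∧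
      ∀ i, ∀ y ∈ Y, insert y (X i) ∈ G

/-- `G` is a balanced `r`-partite `r`-uniform hypergraph with parts `parts` of size `n`. -/
def IsPartite (r n : ℕ) (parts : Fin r → Finset V) (G : Finset (Finset V)) : Prop :=
  (∀ i j, i ≠ j → Disjoint (parts i) (parts j)) ∧
  (∀ v : V, ∃ i, v ∈ parts i) ∧
  (∀ i, (parts i).card = n) ∧
  ∀ e ∈ G, ∀ i, (e ∩ parts i).card = 1

/-- `(ε, α)`-regularity in the sense of the paper. -/
def RegularHG (r s n : ℕ) (parts : Fin r → Finset V) (G : Finset (Finset V)) (ε α : ℝ) : Prop :=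
  (n : ℝ) ^ ((r : ℝ) - 1 / ((s : ℝ) - 1) - ε) ≤ (G.card : ℝ) ∧
  ∀ i : Fin r, ∃ Δ : ℝ,
    (n : ℝ) ^ (1 - 1 / ((s : ℝ) - 1) - ε) ≤ Δ ∧
    Δ ≤ (n : ℝ) ^ (1 - 1 / ((s : ℝ) - 1) + ε) ∧
    ∀ T : Finset V, T.card = r - 1 → Disjoint T (parts i) → 1 ≤ degSet G T →
      Δ / α ≤ (degSet G T : ℝ) ∧ (degSet G T : ℝ) ≤ Δ

/-- The pair `(T; v)` is `δ`-dense on `u` in `G`. -/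
def DenseOn (r s n : ℕ) [Fintype V] (G : Finset (Finset V)) (T : Finset V) (v u : V)
    (δ : ℝ) : Prop :=
  (degSet G T : ℝ) ^ (s - 1) / (r : ℝ) ≤
    ((((linkN G T).powersetCard s).filter fun S =>
      v ∈ S ∧ (n : ℝ) ^ ((r : ℝ) - 2 - 1 / ((s : ℝ) - 1) - δ) ≤ (cdOn r G S u : ℝ)).card : ℝ)

/-- The relation `V_i →_δ^{H,G} V_j`. -/
def Arrow (r s n : ℕ) [Fintype V] (parts : Fin r → Finset V) (H G : Finset (Finset V))
    (i j : Fin r) (δ : ℝ) : Prop :=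
  ∀ T : Finset V, T.card = r - 1 → Disjoint T (parts j) → 1 ≤ degSet H T →
    ∀ v ∈ linkN H T, ∀ u ∈ T ∩ parts i, DenseOn r s n G T v u δ

theorem stmt_2 {V : Type} [Fintype V] (r s t : ℕ) (hr : 1 ≤ r) (hs : 1 ≤ s) (ht : 1 ≤ t)
    (G : Finset (Finset V)) (hunif : ∀ e ∈ G, e.card = r) (hfree : KstFree r s t G)
    (S : Finset V) (hS : S.card = s) :
    (∃ C : Finset V, IsVertexCover C (CN r G S) ∧ C.card < r * t) ∧
    ∀ C : Finset V, IsVertexCover C (CN r G S) →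
      (∀ C' : Finset V, IsVertexCover C' (CN r G S) → C.card ≤ C'.card) →
      C.card < r * t := by
  have mem_CN : ∀ T : Finset V,
      T ∈ CN r G S ↔ T.card = r - 1 ∧ ∀ v ∈ S, v ∉ T ∧ insert v T ∈ G := by
    intro T; simp [CN]
  have noT : ∀ X : Fin t → Finset V, (∀ i, X i ∈ CN r G S) →
      (∀ i j, i ≠ j → Disjoint (X i) (X j)) → False := by
    intro X hX hd
    have hmem : ∀ i, (X i).card = r - 1 ∧ ∀ v ∈ S, v ∉ X i ∧ insert v (X i) ∈ G :=
      fun i => (mem_CN _).1 (hX i)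
    exact hfree ⟨X, S, fun i => (hmem i).1, hS, hd,
      fun i => disjoint_right.2 fun v hv => ((hmem i).2 v hv).1,
      fun i y hy => ((hmem i).2 y hy).2⟩
  have key : ∃ C : Finset V, IsVertexCover C (CN r G S) ∧ C.card < r * t := by
    by_cases hr1 : r = 1
    · subst hr1
      refine ⟨∅, ?_, by simpa using Nat.lt_of_lt_of_le Nat.zero_lt_one ht⟩
      intro T hT
      exfalso
      have hT0 : T = ∅ := by
        have : T.card = 0 := by simpa using ((mem_CN T).1 hT).1
        simpa using this
      exact noT (fun _ => ∅) (fun i => hT0 ▸ hT) (fun i j _ => by simp)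
    · have hr2 : 2 ≤ r := by omega
      set 𝒜 : Finset (Finset (Finset V)) :=
        (CN r G S).powerset.filter
          (fun F => ∀ T1 ∈ F, ∀ T2 ∈ F, T1 ≠ T2 → Disjoint T1 T2) with h𝒜
      have hEmptyA : (∅ : Finset (Finset V)) ∈ 𝒜 := by simp [h𝒜]
      obtain ⟨F, hF𝒜, hFmax⟩ := 𝒜.exists_max_image Finset.card ⟨∅, hEmptyA⟩
      have hFsub : F ⊆ CN r G S := mem_powerset.1 (mem_filter.1 hF𝒜).1
      have hFpd : ∀ T1 ∈ F, ∀ T2 ∈ F, T1 ≠ T2 → Disjoint T1 T2 :=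
        (mem_filter.1 hF𝒜).2
      have hFt : F.card < t := by
        by_contra h
        push_neg at h
        obtain ⟨F', hF'sub, hF'card⟩ := Finset.exists_subset_card_eq h
        let e : Fin t ≃ F' := (F'.equivFin.trans (finCongr hF'card)).symm
        apply noT (fun i => (e i : Finset V))
        · intro i; exact hFsub (hF'sub (e i).2)
        · intro i j hij
          refine hFpd _ (hF'sub (e i).2) _ (hF'sub (e j).2) ?_
          intro hEq
          exact hij (e.injective (Subtype.ext hEq))
      refine ⟨F.biUnion id, ?_, ?_⟩
      · intro T hT
        by_contra hc
        push_neg at hc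
        have hTd : ∀ T' ∈ F, Disjoint T T' := by
          intro T' hT'
          rw [disjoint_right]
          intro v hv hvT
          exact hc v (mem_biUnion.2 ⟨T', hT', hv⟩) hvT
        have hTne : T ∉ F := by
          intro hTF
          have hT0 : T = ∅ := by simpa using disjoint_self.1 (hTd T hTF)
          have hTc : T.card = r - 1 := ((mem_CN T).1 hT).1
          rw [hT0] at hTc
          simp at hTc
          omega
        have hins : insert T F ∈ 𝒜 := by
          rw [h𝒜, mem_filter, mem_powerset]
          constructor
          · intro x hx
            rcases mem_insert.1 hx with h | h
            · exact h ▸ hT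
            · exact hFsub h
          · intro T1 h1 T2 h2 hne
            rcases mem_insert.1 h1 with h1' | h1' <;> rcases mem_insert.1 h2 with h2' | h2'
            · exact absurd (h1'.trans h2'.symm) hne
            · exact h1' ▸ hTd T2 h2'
            · exact h2' ▸ (hTd T1 h1').symm
            · exact hFpd T1 h1' T2 h2' hne
        have := hFmax _ hins
        rw [card_insert_of_notMem hTne] at this
        omega
      · have hbound : (F.biUnion id).card ≤ F.card * (r - 1) := by
          calc (F.biUnion id).card ≤ ∑ T ∈ F, (id T).card := card_biUnion_le
            _ = ∑ _T ∈ F, (r - 1) :=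
                Finset.sum_congr rfl (fun T hT => ((mem_CN T).1 (hFsub hT)).1)
            _ = F.card * (r - 1) := by rw [Finset.sum_const, smul_eq_mul]
        have hlt : F.card * (r - 1) < r * t := by
          obtain ⟨t', rfl⟩ : ∃ t', t = t' + 1 := ⟨t - 1, by omega⟩
          obtain ⟨r', rfl⟩ : ∃ r', r = r' + 1 := ⟨r - 1, by omega⟩
          have hF' : F.card ≤ t' := by omega
          simp only [Nat.add_sub_cancel]
          calc F.card * r' ≤ t' * r' := Nat.mul_le_mul_right _ hF'
            _ < (r' + 1) * (t' + 1) := by nlinarith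
        omega
  obtain ⟨C0, hC0, hC0lt⟩ := key
  exact ⟨⟨C0, hC0, hC0lt⟩, fun C hC hmin => lt_of_le_of_lt (hmin C0 hC0) hC0lt⟩

end
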